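/- Under the corrector transformation law φ_{Rξ}(A; Rx) = φ_ξ(R^T A(R·)R; x), the approximate homogenized matrix satisfies the equivariance property \bar{A}_L(A) Rξ = R \bar{A}_L(R^T A(R·)R) ξ for every ξ ∈ ℝ^d and every orthogonal R leaving the torus invariant. -/

import Mathlib

open MeasureTheory
open scoped RealInnerProductSpace

/-- Gradient transforms under an orthogonal change of variables. -/
lemma gradient_comp_isometry {d : ℕ}
    (R : EuclideanSpace ℝ (Fin d) ≃ₗᵢ[ℝ] EuclideanSpace ℝ (Fin d))
    (f : EuclideanSpace ℝ (Fin d) → ℝ) (x : EuclideanSpace ℝ (Fin d)) :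
    gradient (f ∘ R) x = R.symm (gradient f (R x)) := by
  apply ext_inner_right (𝕜 := ℝ)
  intro w
  have h1 : ⟪gradient (f ∘ R) x, w⟫ = fderiv ℝ (f ∘ R) x w := by
    simp [gradient, InnerProductSpace.toDual_symm_apply]
  have h2 : fderiv ℝ (f ∘ ⇑R) x = (fderiv ℝ f (R x)).comp
      (R.toContinuousLinearEquiv : EuclideanSpace ℝ (Fin d) →L[ℝ] EuclideanSpace ℝ (Fin d)) := by
    simpa using R.toContinuousLinearEquiv.comp_right_fderiv (f := f) (x := x)
  have h3 : ⟪R.symm (gradient f (R x)), w⟫ = ⟪gradient f (R x), R w⟫ := by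
    rw [← R.inner_map_map]; simp
  rw [h1, h2, h3]
  simp [gradient, InnerProductSpace.toDual_symm_apply]

/-- Under the corrector transformation law `φ_{Rξ}(A; Rx) = φ_ξ(Rᵀ A(R·)R; x)`,
the approximate homogenized matrix satisfies the equivariance property
`\bar A_L(A) Rξ = R \bar A_L(Rᵀ A(R·) R) ξ`. -/
theorem stmt10 {d : ℕ} (L : ℝ) (hL : 0 < L) (α β : ℝ) (hα : 0 < α) (hαβ : α ≤ β)
    (Ω : Set (EuclideanSpace ℝ (Fin d)))
    (hΩ : Ω = WithLp.ofLp ⁻¹' (Set.univ.pi fun _ : Fin d => Set.Ico (0 : ℝ) L))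
    (R : EuclideanSpace ℝ (Fin d) ≃ₗᵢ[ℝ] EuclideanSpace ℝ (Fin d))
    (hRΩ : (fun x => R x) '' Ω = Ω)
    (A : EuclideanSpace ℝ (Fin d) → (EuclideanSpace ℝ (Fin d) →L[ℝ] EuclideanSpace ℝ (Fin d)))
    (hAsym : ∀ x u w, ⟪A x u, w⟫ = ⟪u, A x w⟫)
    (hAell : ∀ x w, α * ‖w‖ ^ 2 ≤ ⟪A x w, w⟫ ∧ ⟪A x w, w⟫ ≤ β * ‖w‖ ^ 2)
    (X : Submodule ℝ (EuclideanSpace ℝ (Fin d) → ℝ)) (hX : FiniteDimensional ℝ X)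
    (hXR : ∀ ψ ∈ X, (fun x => ψ (R x)) ∈ X)
    (ξ : EuclideanSpace ℝ (Fin d))
    (u v : EuclideanSpace ℝ (Fin d) → ℝ) (hu : u ∈ X) (hv : v ∈ X)
    (hGalu : ∀ ψ ∈ X, ∫ x in Ω, ⟪gradient ψ x, A x (R ξ + gradient u x)⟫ = 0)
    (hGalv : ∀ ψ ∈ X,
      ∫ x in Ω, ⟪gradient ψ x, R.symm (A (R x) (R (ξ + gradient v x)))⟫ = 0)
    -- the corrector transformation law φ_{Rξ}(A; Rx) = φ_ξ(Rᵀ A(R·)R; x)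
    (htrans : ∀ x ∈ Ω, u (R x) = v x)
    (hIntu : IntegrableOn (fun x => A x (R ξ + gradient u x)) Ω volume)
    (hIntv : IntegrableOn
      (fun x => R.symm (A (R x) (R (ξ + gradient v x)))) Ω volume) :
    (∫ x in Ω, A x (R ξ + gradient u x)) =
      R (∫ x in Ω, R.symm (A (R x) (R (ξ + gradient v x)))) := by
  -- Step 1: pull `R` inside the integral on the RHS.
  have hR := (R.toContinuousLinearEquiv :
      EuclideanSpace ℝ (Fin d) →L[ℝ] EuclideanSpace ℝ (Fin d)).integral_comp_comm hIntv
  have hRHS : R (∫ x in Ω, R.symm (A (R x) (R (ξ + gradient v x))))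
      = ∫ x in Ω, A (R x) (R (ξ + gradient v x)) := by
    rw [show R (∫ x in Ω, R.symm (A (R x) (R (ξ + gradient v x))))
      = R.toContinuousLinearEquiv.toContinuousLinearMap
        (∫ x in Ω, R.symm (A (R x) (R (ξ + gradient v x)))) from rfl, ← hR]
    simp
  rw [hRHS]
  -- Step 2: change of variables `x ↦ R x` in the LHS.
  have hmp : MeasurePreserving (fun x => R x)
      (volume : Measure (EuclideanSpace ℝ (Fin d))) volume := R.measurePreserving
  have hemb : MeasurableEmbedding (fun x => R x) :=
    R.toHomeomorph.measurableEmbedding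
  have hpre : (fun x => R x) ⁻¹' Ω = Ω := by
    conv_lhs => rw [← hRΩ]
    rw [Set.preimage_image_eq _ R.injective]
  have hLHS : (∫ x in Ω, A x (R ξ + gradient u x))
      = ∫ x in Ω, A (R x) (R ξ + gradient u (R x)) := by
    rw [← hmp.setIntegral_preimage_emb hemb (fun x => A x (R ξ + gradient u x)) Ω, hpre]
  rw [hLHS]
  -- Step 3: the two integrands agree a.e. on Ω.
  have hconv : Convex ℝ Ω := by
    rw [hΩ]; exact (convex_pi fun i _ => convex_Ico 0 L).linear_preimage (WithLp.linearEquiv 2 ℝ (Fin d → ℝ)).toLinearMap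
  have hfr : volume (frontier Ω) = 0 := hconv.addHaar_frontier volume
  have hsub : Ω \ interior Ω ⊆ frontier Ω := fun x hx => ⟨subset_closure hx.1, hx.2⟩
  have hnull : volume (Ω \ interior Ω) = 0 := measure_mono_null hsub hfr
  have hmeas : MeasurableSet Ω := by
    rw [hΩ]
    exact (MeasurableSet.univ_pi fun i => measurableSet_Ico).preimage (WithLp.measurable_ofLp 2 _)
  apply setIntegral_congr_ae hmeas
  have hae : ∀ᵐ x : EuclideanSpace ℝ (Fin d), x ∉ Ω \ interior Ω :=
    (ae_iff.2 (by simp only [not_not]; exact hnull))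
  filter_upwards [hae] with x hx hxΩ
  have hxint : x ∈ interior Ω := by
    by_contra h; exact hx ⟨hxΩ, h⟩
  -- On a neighborhood of `x`, `v = u ∘ R`.
  have hev : v =ᶠ[nhds x] (u ∘ R) := by
    filter_upwards [isOpen_interior.mem_nhds hxint] with y hy
    have hyΩ : y ∈ Ω := interior_subset hy
    exact (htrans y hyΩ).symm
  have hgrad : gradient v x = gradient (u ∘ R) x := by
    unfold gradient
    rw [hev.fderiv_eq]
  have hkey : gradient u (R x) = R (gradient v x) := by
    rw [hgrad, gradient_comp_isometry R u x]
    simp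
  rw [hkey, ← map_add]
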